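/- Let p be a prime, A a commutative ring of characteristic p, and v ∈ A. Let B := A[X]/(X^p − v) (Mathlib's AdjoinRoot of the monic polynomial X^p − v). Then for u ∈ A, the image of u in B is a p-th power of an element of B if and only if there exist elements a₀, a₁, …, a_{p−1} ∈ A with u = ∑_{i=0}^{p−1} a_i^p · v^i. -/

import Mathlib

open Polynomial

/-- Lemma 2.4.2 (first assertion): over a ring `A` of characteristic `p`, an element
`u ∈ A` becomes a `p`-th power in `B = A[X]/(X^p − v)` if and only if
`u = ∑_{i<p} aᵢ^p vⁱ` for some `aᵢ ∈ A`. -/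
theorem pth_power_in_alpha_p_extension_iff
    (p : ℕ) (hp : p.Prime) (A : Type*) [CommRing A] [CharP A p] (v : A) (u : A) :
    (∃ b : AdjoinRoot (X ^ p - C v), b ^ p = AdjoinRoot.of (X ^ p - C v) u) ↔
      (∃ a : Fin p → A, u = ∑ i : Fin p, a i ^ p * v ^ (i : ℕ)) := by
  rcases subsingleton_or_nontrivial A with hA | hA
  · constructor
    · intro _; exact ⟨fun _ => 0, Subsingleton.elim _ _⟩
    · intro _
      haveI : Subsingleton (AdjoinRoot (X ^ p - C v)) := AdjoinRoot.mk_surjective.subsingleton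
      exact ⟨0, Subsingleton.elim _ _⟩
  set q : A[X] := X ^ p - C v with hq_def
  have hq : q.Monic := monic_X_pow_sub_C v hp.ne_zero
  have hdeg : q.degree = (p : ℕ) := by
    simpa using degree_X_pow_sub_C hp.pos v
  -- injectivity of `of`
  have hinj : Function.Injective (AdjoinRoot.of q) := by
    intro a b h
    have hofC : ∀ x : A, AdjoinRoot.of q x = AdjoinRoot.mk q (C x) := fun x => rfl
    rw [hofC, hofC] at h
    have h2 := congrArg (AdjoinRoot.modByMonicHom hq) h
    rw [AdjoinRoot.modByMonicHom_mk, AdjoinRoot.modByMonicHom_mk,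
      (modByMonic_eq_self_iff hq).mpr, (modByMonic_eq_self_iff hq).mpr] at h2
    · exact C_injective h2
    · exact lt_of_le_of_lt (degree_C_le) (by rw [hdeg]; exact_mod_cast hp.pos)
    · exact lt_of_le_of_lt (degree_C_le) (by rw [hdeg]; exact_mod_cast hp.pos)
  haveI : CharP (AdjoinRoot q) p := by
    rw [← AdjoinRoot.algebraMap_eq] at hinj
    exact charP_of_injective_algebraMap hinj p
  haveI : ExpChar (AdjoinRoot q) p := ExpChar.prime hp
  have hroot : (AdjoinRoot.root q) ^ p = AdjoinRoot.of q v := by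
    have := AdjoinRoot.eval₂_root q
    rw [hq_def] at this
    simp only [eval₂_sub, eval₂_pow, eval₂_X, eval₂_C] at this
    rw [hq_def]
    exact sub_eq_zero.mp this
  have hkey : ∀ a : Fin p → A,
      (∑ i : Fin p, AdjoinRoot.of q (a i) * AdjoinRoot.root q ^ (i : ℕ)) ^ p =
        AdjoinRoot.of q (∑ i : Fin p, a i ^ p * v ^ (i : ℕ)) := by
    intro a
    rw [sum_pow_char]
    rw [map_sum]
    refine Finset.sum_congr rfl fun i _ => ?_
    rw [mul_pow, ← pow_mul, mul_comm (i : ℕ) p, pow_mul, hroot, map_mul, map_pow, map_pow]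
  constructor
  · rintro ⟨b, hb⟩
    obtain ⟨f, rfl⟩ := AdjoinRoot.mk_surjective b
    set g : A[X] := f %ₘ q with hg_def
    have hmk : AdjoinRoot.mk q g = AdjoinRoot.mk q f := by
      rw [hg_def, modByMonic_eq_sub_mul_div f q, map_sub, map_mul, AdjoinRoot.mk_self,
        zero_mul, sub_zero]
    have hgdeg : g.natDegree < p := by
      rcases eq_or_ne g 0 with h0 | h0
      · rw [h0, natDegree_zero]; exact hp.pos
      · have := degree_modByMonic_lt f hq
        rw [hdeg] at this
        exact (natDegree_lt_iff_degree_lt h0).mpr this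
    refine ⟨fun i => g.coeff i, hinj ?_⟩
    rw [← hb, ← hkey]
    congr 1
    rw [← hmk]
    conv_lhs => rw [g.as_sum_range' p hgdeg]
    rw [map_sum, ← Fin.sum_univ_eq_sum_range (fun i => AdjoinRoot.mk q (monomial i (g.coeff i)))]
    refine Finset.sum_congr rfl fun i _ => ?_
    rw [← C_mul_X_pow_eq_monomial, map_mul, map_pow, AdjoinRoot.mk_X]
    rfl
  · rintro ⟨a, rfl⟩
    exact ⟨∑ i : Fin p, AdjoinRoot.of q (a i) * AdjoinRoot.root q ^ (i : ℕ), hkey a⟩
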